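/- arXiv:2105.11724 — 4 statements merged into one kernel-verified Lean document; each statement's English description precedes it below -/
import Mathlib

section
/- Let p ≥ 2 and let v be a real-valued function on subsets of {1,…,p} with v(∅) = 0. For β ∈ ℝ^p define the weighted least-squares cost ℓ*(β) = Σ_{U : ∅ ≠ U ⊊ {1,…,p}} w(U) · (v(U) − Σ_{j∈U} β_j)². Then, over the constraint set {β ∈ ℝ^p : Σ_{j=1}^p β_j = v({1,…,p})}, the cost ℓ* admits a unique minimizer, and this minimizer is the vector of Shapley values (φ_1(v),…,φ_p(v)). -/
open Finset

-- N1: C(n,s+1)*(s+1)*(n-s-1) = n*(n-1)*C(n-2,s)  for s+2 ≤ n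
lemma nat_id1 (n s : ℕ) (h : s + 2 ≤ n) :
    n.choose (s+1) * (s+1) * (n - s - 1) = n * (n-1) * (n-2).choose s := by
  obtain ⟨m, rfl⟩ : ∃ m, n = m + 2 := ⟨n - 2, by omega⟩
  have hs : s ≤ m := by omega
  have h1 : (m+2) * (m+1).choose s = (m+2).choose (s+1) * (s+1) :=
    Nat.add_one_mul_choose_eq (m+1) s
  have h2 : (m+1).choose (s+1) * (s+1) = (m+1).choose s * (m+1-s) :=
    Nat.choose_succ_right_eq (m+1) s
  have h3 : (m+1) * m.choose s = (m+1).choose (s+1) * (s+1) :=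
    Nat.add_one_mul_choose_eq m s
  have hms : m + 2 - s - 1 = m + 1 - s := by omega
  rw [hms]
  calc (m+2).choose (s+1) * (s+1) * (m+1-s)
      = (m+2) * ((m+1).choose s * (m+1-s)) := by rw [← h1]; ring
    _ = (m+2) * ((m+1) * m.choose s) := by rw [← h2, h3]
    _ = (m+2) * (m+2-1) * (m+2-2).choose s := by
        rw [show m+2-1 = m+1 from rfl, show m+2-2 = m from rfl]; ring
-- N2: (n-1) * C(n,s+1) * C(n-2,s) = n * C(n-1,s) * C(n-1,s+1)
lemma nat_id2 (n s : ℕ) (h : s + 2 ≤ n) :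
    (n-1) * n.choose (s+1) * (n-2).choose s = n * ((n-1).choose s * (n-1).choose (s+1)) := by
  obtain ⟨m, rfl⟩ : ∃ m, n = m + 2 := ⟨n - 2, by omega⟩
  have hs : s ≤ m := by omega
  have h1 : (m+1) * m.choose s = (m+1).choose (s+1) * (s+1) := Nat.add_one_mul_choose_eq m s
  have h2 : (m+2) * (m+1).choose s = (m+2).choose (s+1) * (s+1) := Nat.add_one_mul_choose_eq (m+1) s
  simp only [Nat.add_sub_cancel, show m+2-1 = m+1 from rfl]
  calc (m+1) * (m+2).choose (s+1) * m.choose s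
      = (m+2).choose (s+1) * ((m+1) * m.choose s) := by ring
    _ = (m+2).choose (s+1) * ((m+1).choose (s+1) * (s+1)) := by rw [h1]
    _ = ((m+2).choose (s+1) * (s+1)) * (m+1).choose (s+1) := by ring
    _ = ((m+2) * (m+1).choose s) * (m+1).choose (s+1) := by rw [← h2]
    _ = (m+2) * ((m+1).choose s * (m+1).choose (s+1)) := by ring



/-- The Shapley value of index `j` for a cooperative game `v` on subsets of `{1,…,p}`. -/
noncomputable def shapleyValue {p : ℕ} (v : Finset (Fin p) → ℝ) (j : Fin p) : ℝ :=
  ∑ U ∈ (Finset.univ.erase j).powerset,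
    (1 / p : ℝ) * ((p - 1).choose U.card : ℝ)⁻¹ * (v (insert j U) - v U)

/-- The Shapley kernel weight `w(U) = (p−1)/(C(p,|U|)·|U|·(p−|U|))`. -/
noncomputable def shapleyWeight (p : ℕ) (U : Finset (Fin p)) : ℝ :=
  ((p : ℝ) - 1) / ((p.choose U.card : ℝ) * (U.card : ℝ) * ((p : ℝ) - (U.card : ℝ)))

/-- The weighted least-squares cost
`ℓ*(β) = Σ_{U : ∅ ≠ U ⊊ {1,…,p}} w(U) · (v(U) − Σ_{j∈U} β_j)²`. -/
noncomputable def shapleyLoss {p : ℕ} (v : Finset (Fin p) → ℝ) (β : Fin p → ℝ) : ℝ :=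
  ∑ U ∈ Finset.univ.powerset.filter (fun U => U ≠ ∅ ∧ U ≠ Finset.univ),
    shapleyWeight p U * (v U - ∑ j ∈ U, β j) ^ 2

noncomputable def scoeff (n s : ℕ) : ℝ := (1 / n : ℝ) * ((n-1).choose s : ℝ)⁻¹

lemma shapleyWeight_card {p : ℕ} (U : Finset (Fin p)) (s : ℕ)
    (hU : U.card = s + 1) (h : s + 2 ≤ p) :
    shapleyWeight p U = ((p : ℝ) * ((p-2).choose s : ℝ))⁻¹ := by
  obtain ⟨m, hm⟩ : ∃ m, p = s + m + 2 := ⟨p - s - 2, by omega⟩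
  subst hm
  have key : (s+m+2).choose (s+1) * (s+1) * (m+1)
      = (s+m+2) * (s+m+1) * (s+m).choose s := by
    have h1 := nat_id1 (s+m+2) s (by omega)
    rw [show s+m+2-s-1 = m+1 by omega, show s+m+2-1 = s+m+1 by omega,
        show s+m+2-2 = s+m by omega] at h1
    exact h1
  have keyR : ((s+m+2).choose (s+1) : ℝ) * ((s:ℝ)+1) * ((m:ℝ)+1)
      = ((s:ℝ)+(m:ℝ)+2) * ((s:ℝ)+(m:ℝ)+1) * ((s+m).choose s : ℝ) := by
    exact_mod_cast congrArg (fun x : ℕ => (x:ℝ)) key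
  have hc : (0:ℝ) < ((s+m+2).choose (s+1) : ℝ) := by
    exact_mod_cast Nat.choose_pos (by omega)
  have hc2 : (0:ℝ) < ((s+m).choose s : ℝ) := by
    exact_mod_cast Nat.choose_pos (by omega)
  rw [shapleyWeight, hU, show s+m+2-2 = s+m by omega]
  push_cast
  rw [show ((s:ℝ)+↑m+2 : ℝ) - ((s:ℝ)+1) = (m:ℝ)+1 by ring, keyR]
  have h1 : ((s:ℝ)+↑m+2) ≠ 0 := by positivity
  have h2 : ((s:ℝ)+↑m+1) ≠ 0 := by positivity
  field_simp
  ring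

lemma scoeff_sum {p : ℕ} (s : ℕ) (h : s + 2 ≤ p) :
    ((p:ℝ)-1)/p * (scoeff p s + scoeff p (s+1)) = ((p : ℝ) * ((p-2).choose s : ℝ))⁻¹ := by
  obtain ⟨m, hm⟩ : ∃ m, p = s + m + 2 := ⟨p - s - 2, by omega⟩
  subst hm
  have key : (s+m+1) * ((s+m+1).choose s + (s+m+1).choose (s+1)) * (s+m).choose s
      = (s+m+2) * ((s+m+1).choose s * (s+m+1).choose (s+1)) := by
    have h2 := nat_id2 (s+m+2) s (by omega)
    rw [show s+m+2-1 = s+m+1 by omega, show s+m+2-2 = s+m by omega] at h2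
    have pas : (s+m+2).choose (s+1) = (s+m+1).choose s + (s+m+1).choose (s+1) :=
      Nat.choose_succ_succ' (s+m+1) s
    rw [pas] at h2
    exact h2
  have keyR : ((s:ℝ)+(m:ℝ)+1) * (((s+m+1).choose s : ℝ) + ((s+m+1).choose (s+1) : ℝ)) * ((s+m).choose s : ℝ)
      = ((s:ℝ)+(m:ℝ)+2) * (((s+m+1).choose s : ℝ) * ((s+m+1).choose (s+1) : ℝ)) := by
    exact_mod_cast congrArg (fun x : ℕ => (x:ℝ)) key
  have hc1 : (0:ℝ) < ((s+m+1).choose s : ℝ) := by exact_mod_cast Nat.choose_pos (by omega)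
  have hc2 : (0:ℝ) < ((s+m+1).choose (s+1) : ℝ) := by exact_mod_cast Nat.choose_pos (by omega)
  have hc3 : (0:ℝ) < ((s+m).choose s : ℝ) := by exact_mod_cast Nat.choose_pos (by omega)
  rw [scoeff, scoeff, show s+m+2-1 = s+m+1 by omega, show s+m+2-2 = s+m by omega]
  push_cast
  field_simp
  linear_combination keyR

lemma shapleyValue_eq {p : ℕ} (v : Finset (Fin p) → ℝ) (j : Fin p) :
    shapleyValue v j = ∑ U ∈ (Finset.univ.erase j).powerset,
      scoeff p U.card * (v (insert j U) - v U) := rfl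

lemma powerset_erase {p : ℕ} (j : Fin p) :
    (Finset.univ.erase j).powerset
      = Finset.univ.filter (fun U : Finset (Fin p) => j ∉ U) := by
  ext U
  simp [Finset.subset_erase]

lemma scoeff_balance {p s : ℕ} (h1 : 1 ≤ s) (h2 : s + 1 ≤ p) :
    (s:ℝ) * scoeff p (s-1) = ((p - s : ℕ):ℝ) * scoeff p s := by
  obtain ⟨t, rfl⟩ : ∃ t, s = t + 1 := ⟨s - 1, by omega⟩
  obtain ⟨r, rfl⟩ : ∃ r, p = t + r + 2 := ⟨p - t - 2, by omega⟩
  have key : (t+r+1).choose (t+1) * (t+1) = (t+r+1).choose t * (r+1) := by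
    have := Nat.choose_succ_right_eq (t+r+1) t
    rw [show t+r+1-t = r+1 by omega] at this
    exact this
  have keyR : ((t+r+1).choose (t+1) : ℝ) * ((t:ℝ)+1) = ((t+r+1).choose t : ℝ) * ((r:ℝ)+1) := by
    exact_mod_cast congrArg (fun x : ℕ => (x:ℝ)) key
  have hc1 : (0:ℝ) < ((t+r+1).choose t : ℝ) := by exact_mod_cast Nat.choose_pos (by omega)
  have hc2 : (0:ℝ) < ((t+r+1).choose (t+1) : ℝ) := by exact_mod_cast Nat.choose_pos (by omega)
  rw [scoeff, scoeff, show t+1-1 = t by omega, show t+r+2-1 = t+r+1 by omega,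
    show t+r+2-(t+1) = r+1 by omega]
  push_cast
  field_simp
  linear_combination keyR

lemma shapley_efficiency {p : ℕ} (hp : 2 ≤ p) (v : Finset (Fin p) → ℝ) (hv : v ∅ = 0) :
    ∑ j : Fin p, shapleyValue v j = v Finset.univ := by
  classical
  have step1 : ∀ j : Fin p, shapleyValue v j
      = (∑ S ∈ Finset.univ.filter (fun S : Finset (Fin p) => j ∈ S),
          scoeff p (S.card - 1) * v S)
        - ∑ U ∈ Finset.univ.filter (fun U : Finset (Fin p) => j ∉ U),
          scoeff p U.card * v U := by
    intro j
    rw [shapleyValue_eq]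
    have : ∀ U ∈ (Finset.univ.erase j).powerset,
        scoeff p U.card * (v (insert j U) - v U)
          = scoeff p U.card * v (insert j U) - scoeff p U.card * v U :=
      fun U _ => mul_sub _ _ _
    rw [Finset.sum_congr rfl this, Finset.sum_sub_distrib]
    congr 1
    · refine Finset.sum_nbij' (fun U => insert j U) (fun S => S.erase j) ?_ ?_ ?_ ?_ ?_
      · intro U hU
        simp
      · intro S hS
        simp only [Finset.mem_powerset, Finset.subset_erase]
        exact ⟨Finset.subset_univ _, Finset.notMem_erase _ _⟩
      · intro U hU
        simp only [Finset.mem_powerset, Finset.subset_erase] at hU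
        exact Finset.erase_insert hU.2
      · intro S hS
        simp only [Finset.mem_filter] at hS
        exact Finset.insert_erase hS.2
      · intro U hU
        simp only [Finset.mem_powerset, Finset.subset_erase] at hU
        rw [Finset.card_insert_of_notMem hU.2]
        simp
    · rw [powerset_erase]
  rw [Finset.sum_congr rfl (fun j _ => step1 j), Finset.sum_sub_distrib]
  have A : (∑ j : Fin p, ∑ S ∈ Finset.univ.filter (fun S : Finset (Fin p) => j ∈ S),
        scoeff p (S.card - 1) * v S)
      = ∑ S : Finset (Fin p), (S.card : ℝ) * (scoeff p (S.card - 1) * v S) := by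
    simp only [Finset.sum_filter]
    rw [Finset.sum_comm]
    refine Finset.sum_congr rfl fun S _ => ?_
    rw [Finset.sum_ite_mem, Finset.univ_inter, Finset.sum_const, nsmul_eq_mul]
  have B : (∑ j : Fin p, ∑ U ∈ Finset.univ.filter (fun U : Finset (Fin p) => j ∉ U),
        scoeff p U.card * v U)
      = ∑ U : Finset (Fin p), ((p - U.card : ℕ) : ℝ) * (scoeff p U.card * v U) := by
    simp only [Finset.sum_filter]
    rw [Finset.sum_comm]
    refine Finset.sum_congr rfl fun U _ => ?_
    have : ∀ j : Fin p, (if j ∉ U then scoeff p U.card * v U else 0)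
        = if j ∈ Uᶜ then scoeff p U.card * v U else 0 := by
      intro j; simp [Finset.mem_compl]
    rw [Finset.sum_congr rfl fun j _ => this j, Finset.sum_ite_mem, Finset.univ_inter,
      Finset.sum_const, nsmul_eq_mul, Finset.card_compl]
    simp
  rw [A, B, ← Finset.sum_sub_distrib]
  have per : ∀ S : Finset (Fin p),
      (S.card : ℝ) * (scoeff p (S.card - 1) * v S)
        - ((p - S.card : ℕ) : ℝ) * (scoeff p S.card * v S)
      = if S = Finset.univ then v Finset.univ else 0 := by
    intro S
    by_cases hSu : S = Finset.univ
    · subst hSu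
      rw [if_pos rfl]
      have hcard : (Finset.univ : Finset (Fin p)).card = p := by simp
      rw [hcard, Nat.sub_self]
      have hp0 : (p:ℝ) ≠ 0 := Nat.cast_ne_zero.mpr (by omega)
      rw [Nat.cast_zero, zero_mul, sub_zero]
      rw [scoeff, Nat.choose_self, Nat.cast_one, inv_one]
      field_simp
    · rw [if_neg hSu]
      by_cases hS0 : S = ∅
      · subst hS0; simp [hv]
      · have h1 : 1 ≤ S.card := Finset.card_pos.mpr (Finset.nonempty_of_ne_empty hS0)
        have h2 : S.card + 1 ≤ p := by
          have := Finset.card_lt_card (Finset.ssubset_univ_iff.mpr hSu)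
          simpa using this
        have bal := scoeff_balance (p := p) h1 h2
        linear_combination v S * bal
  rw [Finset.sum_congr rfl fun S _ => per S, Finset.sum_ite_eq' Finset.univ]
  simp

lemma shapley_diff {p : ℕ} (v : Finset (Fin p) → ℝ) {j k : Fin p} (hjk : j ≠ k) :
    shapleyValue v j - shapleyValue v k
      = ∑ S ∈ ((Finset.univ.erase j).erase k).powerset,
          (scoeff p S.card + scoeff p (S.card + 1))
            * (v (insert j S) - v (insert k S)) := by
  classical
  set E := (Finset.univ.erase j).erase k with hE
  have hkE : k ∉ E := Finset.notMem_erase _ _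
  have hjE : j ∉ E := by
    rw [hE, Finset.erase_right_comm]
    exact Finset.notMem_erase _ _
  have hEj : Finset.univ.erase j = insert k E := by
    rw [hE, Finset.insert_erase]
    exact Finset.mem_erase.mpr ⟨Ne.symm hjk, Finset.mem_univ k⟩
  have hEk : Finset.univ.erase k = insert j E := by
    rw [hE, Finset.erase_right_comm, Finset.insert_erase]
    exact Finset.mem_erase.mpr ⟨hjk, Finset.mem_univ j⟩
  rw [shapleyValue_eq v j, shapleyValue_eq v k, hEj, hEk,
    Finset.sum_powerset_insert hkE, Finset.sum_powerset_insert hjE]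
  rw [show ∀ a b c d : ℝ, a + b - (c + d) = (a - c) + (b - d) from by intros; ring]
  rw [← Finset.sum_sub_distrib, ← Finset.sum_sub_distrib, ← Finset.sum_add_distrib]
  refine Finset.sum_congr rfl fun S hS => ?_
  have hSE : S ⊆ E := Finset.mem_powerset.mp hS
  have hjS : j ∉ S := fun h => hjE (hSE h)
  have hkS : k ∉ S := fun h => hkE (hSE h)
  rw [Finset.card_insert_of_notMem hkS, Finset.card_insert_of_notMem hjS,
    Finset.insert_comm j k S]
  ring

lemma weight_sum {p : ℕ} (hp : 2 ≤ p) {j k : Fin p} (hjk : j ≠ k) :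
    ∑ S ∈ ((Finset.univ.erase j).erase k).powerset,
        shapleyWeight p (insert j S) = ((p:ℝ) - 1)/p := by
  classical
  set E := (Finset.univ.erase j).erase k with hE
  have hEcard : E.card = p - 2 := by
    rw [hE, Finset.card_erase_of_mem, Finset.card_erase_of_mem] <;>
      simp [Finset.mem_erase, Ne.symm hjk, hjk]
    omega
  have hjE : j ∉ E := by
    rw [hE, Finset.erase_right_comm]; exact Finset.notMem_erase _ _
  have step : ∀ S ∈ E.powerset,
      shapleyWeight p (insert j S) = ((p : ℝ) * ((p-2).choose S.card : ℝ))⁻¹ := by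
    intro S hS
    have hSE := Finset.mem_powerset.mp hS
    have hjS : j ∉ S := fun h => hjE (hSE h)
    have hcard : S.card ≤ p - 2 := hEcard ▸ Finset.card_le_card hSE
    exact shapleyWeight_card _ S.card (Finset.card_insert_of_notMem hjS) (by omega)
  rw [Finset.sum_congr rfl step]
  rw [Finset.sum_powerset]
  have inner : ∀ n ∈ Finset.range (E.card + 1),
      (∑ S ∈ Finset.powersetCard n E, ((p : ℝ) * ((p-2).choose S.card : ℝ))⁻¹)
        = (1 : ℝ)/p := by
    intro n hn
    have hn' : n ≤ p - 2 := by
      rw [Finset.mem_range] at hn; omega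
    have : ∀ S ∈ Finset.powersetCard n E, ((p : ℝ) * ((p-2).choose S.card : ℝ))⁻¹
        = ((p : ℝ) * ((p-2).choose n : ℝ))⁻¹ := by
      intro S hS
      rw [(Finset.mem_powersetCard.mp hS).2]
    rw [Finset.sum_congr rfl this, Finset.sum_const, Finset.card_powersetCard, hEcard,
      nsmul_eq_mul]
    have hch : (0:ℝ) < ((p-2).choose n : ℝ) := by exact_mod_cast Nat.choose_pos hn'
    have hp0 : (p:ℝ) ≠ 0 := Nat.cast_ne_zero.mpr (by omega)
    field_simp
  rw [Finset.sum_congr rfl inner, Finset.sum_const, Finset.card_range, hEcard, nsmul_eq_mul]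
  have : ((p - 2 + 1 : ℕ) : ℝ) = (p:ℝ) - 1 := by
    rw [show p - 2 + 1 = p - 1 by omega, Nat.cast_sub (by omega)]; norm_num
  rw [this]
  ring

lemma weighted_v_sum {p : ℕ} (hp : 2 ≤ p) (v : Finset (Fin p) → ℝ)
    {j k : Fin p} (hjk : j ≠ k) :
    ∑ S ∈ ((Finset.univ.erase j).erase k).powerset,
        shapleyWeight p (insert j S) * (v (insert j S) - v (insert k S))
      = ((p:ℝ) - 1)/p * (shapleyValue v j - shapleyValue v k) := by
  classical
  set E := (Finset.univ.erase j).erase k with hE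
  have hEcard : E.card = p - 2 := by
    rw [hE, Finset.card_erase_of_mem, Finset.card_erase_of_mem] <;>
      simp [Finset.mem_erase, Ne.symm hjk, hjk]
    omega
  have hjE : j ∉ E := by
    rw [hE, Finset.erase_right_comm]; exact Finset.notMem_erase _ _
  rw [shapley_diff v hjk, Finset.mul_sum]
  refine Finset.sum_congr rfl fun S hS => ?_
  have hSE := Finset.mem_powerset.mp hS
  have hjS : j ∉ S := fun h => hjE (hSE h)
  have hcard : S.card ≤ p - 2 := hEcard ▸ Finset.card_le_card hSE
  rw [shapleyWeight_card _ S.card (Finset.card_insert_of_notMem hjS) (by omega),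
    ← scoeff_sum S.card (by omega)]
  ring

lemma reindex_insert {p : ℕ} (f : Finset (Fin p) → ℝ) {j k : Fin p} (hjk : j ≠ k) :
    ∑ U ∈ (Finset.univ.powerset.filter
        (fun U : Finset (Fin p) => U ≠ ∅ ∧ U ≠ Finset.univ)).filter
        (fun U => j ∈ U ∧ k ∉ U), f U
    = ∑ S ∈ ((Finset.univ.erase j).erase k).powerset, f (insert j S) := by
  classical
  refine (Finset.sum_nbij' (fun S => insert j S) (fun U => U.erase j) ?_ ?_ ?_ ?_ ?_).symm
  · intro S hS
    have hSE := Finset.mem_powerset.mp hS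
    have hjS : j ∉ S := fun h => by
      have := hSE h
      rw [Finset.erase_right_comm] at this
      exact Finset.notMem_erase j _ this
    have hkS : k ∉ S := fun h => Finset.notMem_erase k _ (hSE h)
    have hkins : k ∉ insert j S := by
      simp [Finset.mem_insert, Ne.symm hjk, hkS]
    refine Finset.mem_filter.mpr ⟨Finset.mem_filter.mpr ⟨Finset.mem_powerset.mpr
      (Finset.subset_univ _), ?_, ?_⟩, Finset.mem_insert_self j S, hkins⟩
    · exact Finset.insert_ne_empty _ _
    · intro h
      have : k ∈ insert j S := by rw [show insert j S = Finset.univ from h]; exact Finset.mem_univ k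
      exact hkins this
  · intro U hU
    obtain ⟨hU1, hjU, hkU⟩ := Finset.mem_filter.mp hU
    rw [Finset.mem_powerset, Finset.erase_right_comm, Finset.subset_erase]
    constructor
    · rw [Finset.subset_erase]
      exact ⟨Finset.subset_univ _, fun h => hkU (Finset.mem_of_mem_erase h)⟩
    · exact Finset.notMem_erase j U
  · intro S hS
    have hSE := Finset.mem_powerset.mp hS
    have hjS : j ∉ S := fun h => by
      have := hSE h
      rw [Finset.erase_right_comm] at this
      exact Finset.notMem_erase j _ this
    exact Finset.erase_insert hjS
  · intro U hU
    obtain ⟨hU1, hjU, hkU⟩ := Finset.mem_filter.mp hU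
    exact Finset.insert_erase hjU
  · intro S hS
    rfl

lemma g_const {p : ℕ} (hp : 2 ≤ p) (v : Finset (Fin p) → ℝ) (j k : Fin p) :
    (∑ U ∈ (Finset.univ.powerset.filter
        (fun U : Finset (Fin p) => U ≠ ∅ ∧ U ≠ Finset.univ)).filter (fun U => j ∈ U),
      shapleyWeight p U * (v U - ∑ i ∈ U, shapleyValue v i))
    = ∑ U ∈ (Finset.univ.powerset.filter
        (fun U : Finset (Fin p) => U ≠ ∅ ∧ U ≠ Finset.univ)).filter (fun U => k ∈ U),
      shapleyWeight p U * (v U - ∑ i ∈ U, shapleyValue v i) := by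
  classical
  rcases eq_or_ne j k with rfl | hjk
  · rfl
  set 𝒮 := Finset.univ.powerset.filter
      (fun U : Finset (Fin p) => U ≠ ∅ ∧ U ≠ Finset.univ) with h𝒮
  set F : Finset (Fin p) → ℝ :=
      fun U => shapleyWeight p U * (v U - ∑ i ∈ U, shapleyValue v i) with hF
  have split : ∀ a b : Fin p, (∑ U ∈ 𝒮.filter (fun U => a ∈ U), F U)
      = (∑ U ∈ 𝒮.filter (fun U => a ∈ U ∧ b ∈ U), F U)
        + ∑ U ∈ 𝒮.filter (fun U => a ∈ U ∧ b ∉ U), F U := by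
    intro a b
    rw [← Finset.sum_filter_add_sum_filter_not (𝒮.filter (fun U => a ∈ U))
      (fun U => b ∈ U) F]
    congr 1
    · exact Finset.sum_congr (Finset.filter_filter _ _ _) (fun _ _ => rfl)
    · exact Finset.sum_congr (Finset.filter_filter _ _ _) (fun _ _ => rfl)
  rw [split j k, split k j]
  have hcomm : 𝒮.filter (fun U => j ∈ U ∧ k ∈ U) = 𝒮.filter (fun U => k ∈ U ∧ j ∈ U) := by
    apply Finset.filter_congr
    intro U _
    simp [and_comm]
  rw [hcomm]
  congr 1
  -- now the two asymmetric parts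
  rw [reindex_insert F hjk, reindex_insert F hjk.symm]
  have hEE : (Finset.univ.erase k).erase j = (Finset.univ.erase j).erase k :=
    Finset.erase_right_comm
  rw [hEE]
  set E := (Finset.univ.erase j).erase k with hE
  have hEcard : E.card = p - 2 := by
    rw [hE, Finset.card_erase_of_mem, Finset.card_erase_of_mem] <;>
      simp [Finset.mem_erase, Ne.symm hjk, hjk]
    omega
  have hjE : j ∉ E := by
    rw [hE, Finset.erase_right_comm]; exact Finset.notMem_erase _ _
  have hkE : k ∉ E := Finset.notMem_erase _ _
  have per : ∀ S ∈ E.powerset, F (insert j S) - F (insert k S)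
      = shapleyWeight p (insert j S) * (v (insert j S) - v (insert k S))
        - shapleyWeight p (insert j S) * (shapleyValue v j - shapleyValue v k) := by
    intro S hS
    have hSE := Finset.mem_powerset.mp hS
    have hjS : j ∉ S := fun h => hjE (hSE h)
    have hkS : k ∉ S := fun h => hkE (hSE h)
    have hcard : S.card ≤ p - 2 := hEcard ▸ Finset.card_le_card hSE
    rw [hF]
    simp only
    rw [shapleyWeight_card _ S.card (Finset.card_insert_of_notMem hjS) (by omega),
      shapleyWeight_card _ S.card (Finset.card_insert_of_notMem hkS) (by omega),
      Finset.sum_insert hjS, Finset.sum_insert hkS]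
    ring
  have key : (∑ S ∈ E.powerset, F (insert j S)) - ∑ S ∈ E.powerset, F (insert k S) = 0 := by
    rw [← Finset.sum_sub_distrib, Finset.sum_congr rfl per, Finset.sum_sub_distrib,
      ← Finset.sum_mul, weighted_v_sum hp v hjk, weight_sum hp hjk]
    ring
  linarith [key]

lemma cross_zero {p : ℕ} (hp : 2 ≤ p) (v : Finset (Fin p) → ℝ)
    (δ : Fin p → ℝ) (hδ : ∑ i : Fin p, δ i = 0) :
    ∑ U ∈ Finset.univ.powerset.filter
        (fun U : Finset (Fin p) => U ≠ ∅ ∧ U ≠ Finset.univ),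
      (shapleyWeight p U * (v U - ∑ i ∈ U, shapleyValue v i)) * (∑ i ∈ U, δ i) = 0 := by
  classical
  set 𝒮 := Finset.univ.powerset.filter
      (fun U : Finset (Fin p) => U ≠ ∅ ∧ U ≠ Finset.univ) with h𝒮
  set F : Finset (Fin p) → ℝ :=
      fun U => shapleyWeight p U * (v U - ∑ i ∈ U, shapleyValue v i) with hF
  have j₀ : Fin p := ⟨0, by omega⟩
  set G : ℝ := ∑ U ∈ 𝒮.filter (fun U => j₀ ∈ U), F U with hG
  have step1 : ∀ U ∈ 𝒮, F U * (∑ i ∈ U, δ i)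
      = ∑ i : Fin p, (if i ∈ U then F U * δ i else 0) := by
    intro U _
    rw [Finset.sum_ite_mem, Finset.univ_inter, Finset.mul_sum]
  rw [Finset.sum_congr rfl step1, Finset.sum_comm]
  have step2 : ∀ i : Fin p, (∑ U ∈ 𝒮, if i ∈ U then F U * δ i else 0) = δ i * G := by
    intro i
    rw [← Finset.sum_filter, hG]
    rw [show (∑ U ∈ 𝒮.filter (fun U => j₀ ∈ U), F U)
        = ∑ U ∈ 𝒮.filter (fun U => i ∈ U), F U from g_const hp v j₀ i]
    rw [Finset.mul_sum]
    exact Finset.sum_congr rfl fun U _ => mul_comm _ _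
  rw [Finset.sum_congr rfl fun i _ => step2 i, ← Finset.sum_mul, hδ, zero_mul]

lemma weight_pos {p : ℕ} (hp : 2 ≤ p) {U : Finset (Fin p)}
    (h1 : U ≠ ∅) (h2 : U ≠ Finset.univ) : 0 < shapleyWeight p U := by
  have hc1 : 1 ≤ U.card := Finset.card_pos.mpr (Finset.nonempty_of_ne_empty h1)
  have hc2 : U.card + 1 ≤ p := by
    have := Finset.card_lt_card (Finset.ssubset_univ_iff.mpr h2)
    simpa using this
  rw [shapleyWeight_card U (U.card - 1) (by omega) (by omega)]
  have : (0:ℝ) < ((p-2).choose (U.card - 1) : ℝ) := by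
    exact_mod_cast Nat.choose_pos (by omega)
  have hp0 : (0:ℝ) < (p:ℝ) := by exact_mod_cast Nat.pos_of_ne_zero (by omega)
  positivity

/-- Over the constraint set `{β : Σ_j β_j = v({1,…,p})}`, the weighted least-squares cost
`ℓ*` admits the vector of Shapley values as a minimizer, and this minimizer is unique. -/
theorem shapley_unique_minimizer (p : ℕ) (hp : 2 ≤ p)
    (v : Finset (Fin p) → ℝ) (hv : v ∅ = 0) :
    (∑ j : Fin p, shapleyValue v j = v Finset.univ) ∧
    (∀ β : Fin p → ℝ, (∑ j : Fin p, β j = v Finset.univ) →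
      shapleyLoss v (shapleyValue v) ≤ shapleyLoss v β) ∧
    (∀ β : Fin p → ℝ, (∑ j : Fin p, β j = v Finset.univ) →
      shapleyLoss v β = shapleyLoss v (shapleyValue v) → β = shapleyValue v) := by
  classical
  have heff := shapley_efficiency hp v hv
  set φ : Fin p → ℝ := shapleyValue v with hφ
  set 𝒮 := Finset.univ.powerset.filter
      (fun U : Finset (Fin p) => U ≠ ∅ ∧ U ≠ Finset.univ) with h𝒮
  have decomp : ∀ β : Fin p → ℝ, (∑ j : Fin p, β j = v Finset.univ) →
      shapleyLoss v β = shapleyLoss v φ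
        + ∑ U ∈ 𝒮, shapleyWeight p U * (∑ i ∈ U, (β i - φ i)) ^ 2 := by
    intro β hβ
    set δ : Fin p → ℝ := fun i => β i - φ i with hδdef
    have hδ : ∑ i : Fin p, δ i = 0 := by
      rw [hδdef]
      simp only
      rw [Finset.sum_sub_distrib, hβ, heff, sub_self]
    have cross := cross_zero hp v δ hδ
    have per : ∀ U ∈ 𝒮, shapleyWeight p U * (v U - ∑ i ∈ U, β i) ^ 2
        = shapleyWeight p U * (v U - ∑ i ∈ U, φ i) ^ 2
          + shapleyWeight p U * (∑ i ∈ U, δ i) ^ 2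
          - 2 * ((shapleyWeight p U * (v U - ∑ i ∈ U, shapleyValue v i)) * (∑ i ∈ U, δ i)) := by
      intro U _
      have hsum : ∑ i ∈ U, β i = (∑ i ∈ U, φ i) + ∑ i ∈ U, δ i := by
        rw [← Finset.sum_add_distrib]
        exact Finset.sum_congr rfl fun i _ => by rw [hδdef]; ring
      rw [hsum, hφ]
      ring
    rw [shapleyLoss, ← h𝒮, Finset.sum_congr rfl per]
    rw [Finset.sum_sub_distrib, Finset.sum_add_distrib, ← Finset.mul_sum, cross,
      mul_zero, sub_zero]
    rfl
  refine ⟨heff, ?_, ?_⟩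
  · intro β hβ
    rw [decomp β hβ]
    have : (0:ℝ) ≤ ∑ U ∈ 𝒮, shapleyWeight p U * (∑ i ∈ U, (β i - φ i)) ^ 2 := by
      refine Finset.sum_nonneg fun U hU => ?_
      obtain ⟨-, h1, h2⟩ := Finset.mem_filter.mp hU
      exact mul_nonneg (weight_pos hp h1 h2).le (sq_nonneg _)
    linarith
  · intro β hβ heq
    rw [decomp β hβ] at heq
    have hQ : ∑ U ∈ 𝒮, shapleyWeight p U * (∑ i ∈ U, (β i - φ i)) ^ 2 = 0 := by
      linarith
    have hterm : ∀ U ∈ 𝒮, shapleyWeight p U * (∑ i ∈ U, (β i - φ i)) ^ 2 = 0 := by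
      rw [Finset.sum_eq_zero_iff_of_nonneg] at hQ
      · exact hQ
      · intro U hU
        obtain ⟨-, h1, h2⟩ := Finset.mem_filter.mp hU
        exact mul_nonneg (weight_pos hp h1 h2).le (sq_nonneg _)
    funext j
    have hjmem : ({j} : Finset (Fin p)) ∈ 𝒮 := by
      refine Finset.mem_filter.mpr ⟨Finset.mem_powerset.mpr (Finset.subset_univ _),
        Finset.singleton_ne_empty j, ?_⟩
      intro h
      have : ({j} : Finset (Fin p)).card = (Finset.univ : Finset (Fin p)).card := by rw [h]
      simp at this
      omega
    have := hterm {j} hjmem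
    have hw := weight_pos hp (Finset.singleton_ne_empty j)
      (by intro h
          have : ({j} : Finset (Fin p)).card = (Finset.univ : Finset (Fin p)).card := by rw [h]
          simp at this
          omega)
    rw [Finset.sum_singleton] at this
    have hsq : (β j - φ j) ^ 2 = 0 := by
      rcases mul_eq_zero.mp this with h | h
      · exact absurd h hw.ne'
      · exact h
    have : β j - φ j = 0 := by
      exact pow_eq_zero_iff (by norm_num) |>.mp hsq
    linarith
end

section
/- Let (f_n) be a sequence of convex functions from ℝ^p to ℝ converging pointwise to a function f : ℝ^p → ℝ. Then f is convex and the convergence is uniform on every compact subset K of ℝ^p, i.e., sup_{x∈K} |f_n(x) − f(x)| → 0 as n → ∞. -/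
open Metric Set Filter

/-- A convergent real sequence is bounded in absolute value. -/
lemma abs_bound_of_tendsto (u : ℕ → ℝ) (a : ℝ)
    (h : Filter.Tendsto u Filter.atTop (nhds a)) :
    ∃ C : ℝ, 0 ≤ C ∧ ∀ n, |u n| ≤ C := by
  have h' : Filter.Tendsto (fun n => |u n|) Filter.atTop (nhds |a|) := h.abs
  obtain ⟨C, hC⟩ := h'.bddAbove_range
  refine ⟨C, le_trans (abs_nonneg (u 0)) (hC ⟨0, rfl⟩), fun n => hC ⟨n, rfl⟩⟩

/-- Uniform (in `n`) bound for a pointwise convergent sequence of convex functions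
on a closed ball. -/
lemma uniform_abs_bound (p : ℕ)
    (f : ℕ → (Fin p → ℝ) → ℝ) (g : (Fin p → ℝ) → ℝ)
    (hconv : ∀ n, ConvexOn ℝ Set.univ (f n))
    (hpt : ∀ x, Filter.Tendsto (fun n => f n x) Filter.atTop (nhds (g x)))
    (r : ℝ) (hr : 0 ≤ r) :
    ∃ M : ℝ, 0 ≤ M ∧ ∀ n x, x ∈ Metric.closedBall (0 : Fin p → ℝ) r → |f n x| ≤ M := by
  classical
  set V : Set (Fin p → ℝ) := Set.pi Set.univ (fun _ => ({-r, r} : Set ℝ)) with hV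
  have hVfin : V.Finite := Set.Finite.pi fun _ => (Set.finite_singleton r).insert _
  -- the closed ball is the convex hull of the corners
  have hullsub : Metric.closedBall (0 : Fin p → ℝ) r ⊆ convexHull ℝ V := by
    have h1 : Metric.closedBall (0 : Fin p → ℝ) r
        = Set.pi Set.univ (fun _ => Metric.closedBall (0 : ℝ) r) := closedBall_pi _ hr
    have h2 : Metric.closedBall (0 : ℝ) r = convexHull ℝ ({-r, r} : Set ℝ) := by
      rw [Real.closedBall_eq_Icc, convexHull_pair, segment_eq_Icc (by linarith)]
      norm_num
    rw [h1]
    intro x hx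
    rw [hV, convexHull_pi]
    intro i _
    exact h2 ▸ hx i (Set.mem_univ i)
  -- bound at each corner, uniformly over the finitely many corners
  have hcorner : ∃ M₁ : ℝ, 0 ≤ M₁ ∧ ∀ n, ∀ v ∈ V, f n v ≤ M₁ := by
    choose C hC0 hC using fun v => abs_bound_of_tendsto (fun n => f n v) (g v) (hpt v)
    rcases hVfin.exists_finset_coe with ⟨t, ht⟩
    refine ⟨(t.sup fun v => Real.toNNReal (C v) : NNReal), NNReal.coe_nonneg _,
      fun n v hv => ?_⟩
    have hvt : v ∈ t := by rw [← Finset.mem_coe, ht]; exact hv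
    calc f n v ≤ |f n v| := le_abs_self _
      _ ≤ C v := hC v n
      _ = (Real.toNNReal (C v) : ℝ) := (Real.coe_toNNReal _ (hC0 v)).symm
      _ ≤ _ := NNReal.coe_le_coe.2 (Finset.le_sup (f := fun v => Real.toNNReal (C v)) hvt)
  obtain ⟨M₁, hM₁0, hM₁⟩ := hcorner
  obtain ⟨B₀, hB₀0, hB₀⟩ := abs_bound_of_tendsto (fun n => f n 0) (g 0) (hpt 0)
  refine ⟨M₁ + 2 * B₀, by positivity, fun n x hx => ?_⟩
  -- upper bound via the convex hull
  have hupper : ∀ y ∈ Metric.closedBall (0 : Fin p → ℝ) r, f n y ≤ M₁ := by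
    intro y hy
    obtain ⟨v, hv, hfv⟩ :=
      (hconv n).exists_ge_of_mem_convexHull (Set.subset_univ V) (hullsub hy)
    exact hfv.trans (hM₁ n v hv)
  -- lower bound via midpoint trick
  have hnx : -x ∈ Metric.closedBall (0 : Fin p → ℝ) r := by
    simpa using hx
  have hmid : f n 0 ≤ (1/2 : ℝ) * f n x + (1/2 : ℝ) * f n (-x) := by
    have := (hconv n).2 (Set.mem_univ x) (Set.mem_univ (-x))
      (by norm_num : (0:ℝ) ≤ 1/2) (by norm_num : (0:ℝ) ≤ 1/2) (by norm_num)
    simpa using this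
  have hlow : -(M₁ + 2 * B₀) ≤ f n x := by
    have h1 : f n (-x) ≤ M₁ := hupper _ hnx
    have h2 : -B₀ ≤ f n 0 := neg_le_of_abs_le (hB₀ n)
    nlinarith
  have hup : f n x ≤ M₁ + 2 * B₀ := le_add_of_le_of_nonneg (hupper x hx) (by positivity)
  exact abs_le.2 ⟨hlow, hup⟩

/-- If a sequence of convex functions `ℝ^p → ℝ` converges pointwise to `f`, then `f` is
convex and the convergence is uniform on every compact subset of `ℝ^p`. -/
theorem convex_pointwise_to_uniform_on_compacts (p : ℕ)
    (f : ℕ → (Fin p → ℝ) → ℝ) (g : (Fin p → ℝ) → ℝ)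
    (hconv : ∀ n, ConvexOn ℝ Set.univ (f n))
    (hpt : ∀ x, Filter.Tendsto (fun n => f n x) Filter.atTop (nhds (g x))) :
    ConvexOn ℝ Set.univ g ∧
    ∀ K : Set (Fin p → ℝ), IsCompact K →
      TendstoUniformlyOn f g Filter.atTop K := by
  constructor
  · refine ⟨convex_univ, fun x _ y _ a b ha hb hab => ?_⟩
    refine le_of_tendsto_of_tendsto' (hpt _)
      (((hpt x).const_mul a).add ((hpt y).const_mul b)) fun n => ?_
    simpa [smul_eq_mul] using (hconv n).2 (Set.mem_univ x) (Set.mem_univ y) ha hb hab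
  · intro K hK
    obtain ⟨R₀, hR₀⟩ := hK.isBounded.subset_closedBall 0
    set R : ℝ := max R₀ 0 with hRdef
    have hR0 : 0 ≤ R := le_max_right _ _
    have hKR : K ⊆ Metric.closedBall 0 R :=
      hR₀.trans (Metric.closedBall_subset_closedBall (le_max_left _ _))
    obtain ⟨M, hM0, hM⟩ := uniform_abs_bound p f g hconv hpt (R + 2) (by linarith)
    set C : ℝ := 2 * M with hCdef
    have hC0 : 0 ≤ C := by positivity
    -- each f n is Lipschitz with constant C on ball 0 (R+1)
    have hlip : ∀ n, LipschitzOnWith (Real.toNNReal C) (f n)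
        (Metric.ball (0 : Fin p → ℝ) (R + 1)) := by
      intro n
      have h := ((hconv n).subset (Set.subset_univ _)
        (convex_ball (0 : Fin p → ℝ) (R + 2))).lipschitzOnWith_of_abs_le
        (one_pos) (fun a ha => hM n a (by simpa using ha.le))
      have : R + 2 - 1 = R + 1 := by ring
      rw [this] at h
      simpa [hCdef] using h
    have hlipd : ∀ n, ∀ x ∈ Metric.ball (0 : Fin p → ℝ) (R + 1),
        ∀ y ∈ Metric.ball (0 : Fin p → ℝ) (R + 1),
        dist (f n x) (f n y) ≤ C * dist x y := by
      intro n x hx y hy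
      have := (hlip n).dist_le_mul x hx y hy
      rwa [Real.coe_toNNReal _ hC0] at this
    -- g satisfies the same Lipschitz estimate
    have hglip : ∀ x ∈ Metric.ball (0 : Fin p → ℝ) (R + 1),
        ∀ y ∈ Metric.ball (0 : Fin p → ℝ) (R + 1),
        dist (g x) (g y) ≤ C * dist x y := by
      intro x hx y hy
      have htd : Filter.Tendsto (fun n => dist (f n x) (f n y)) Filter.atTop
          (nhds (dist (g x) (g y))) := (hpt x).dist (hpt y)
      exact le_of_tendsto htd (Filter.Eventually.of_forall fun n => hlipd n x hx y hy)
    have hKball : K ⊆ Metric.ball (0 : Fin p → ℝ) (R + 1) := fun x hx =>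
      lt_of_le_of_lt (Metric.mem_closedBall.1 (hKR hx)) (by linarith)
    rw [Metric.tendstoUniformlyOn_iff]
    intro ε hε
    set δ : ℝ := ε / (3 * (C + 1)) with hδdef
    have hδ0 : 0 < δ := by positivity
    obtain ⟨t, htK, htcov⟩ := hK.elim_nhds_subcover (fun c => Metric.ball c δ)
      (fun c _ => Metric.ball_mem_nhds c hδ0)
    have hev : ∀ᶠ n in Filter.atTop, ∀ c ∈ t, dist (f n c) (g c) < ε / 3 := by
      rw [Filter.eventually_all_finset]
      intro c _
      have := (hpt c).eventually (Metric.ball_mem_nhds (g c) (by positivity : (0:ℝ) < ε / 3))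
      filter_upwards [this] with n hn
      simpa [Metric.mem_ball] using hn
    filter_upwards [hev] with n hn x hx
    obtain ⟨c, hct, hxc⟩ : ∃ c ∈ t, x ∈ Metric.ball c δ := by
      have := htcov hx
      simpa using this
    have hcK : c ∈ K := htK c hct
    have hxb := hKball hx
    have hcb := hKball hcK
    have hxcδ : dist x c < δ := Metric.mem_ball.1 hxc
    have heq : (C + 1) * δ = ε / 3 := by
      rw [hδdef]; field_simp
    have hCδ : C * δ ≤ ε / 3 := by nlinarith
    calc dist (g x) (f n x)
        ≤ dist (g x) (g c) + dist (g c) (f n c) + dist (f n c) (f n x) :=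
          dist_triangle4 _ _ _ _
      _ ≤ C * dist x c + dist (g c) (f n c) + C * dist c x := by
          gcongr
          · exact hglip x hxb c hcb
          · exact hlipd n c hcb x hxb
      _ < C * δ + ε / 3 + C * δ := by
          rw [dist_comm (g c)]
          have h1 : C * dist x c ≤ C * δ := by nlinarith [dist_nonneg (x := x) (y := c)]
          have h2 : C * dist c x ≤ C * δ := by
            rw [dist_comm]; exact h1
          have h3 := hn c hct
          linarith
      _ ≤ ε / 3 + ε / 3 + ε / 3 := by linarith
      _ = ε := by ring
end

section
/- Let X = (X^{(1)},…,X^{(p)}) be a random vector and Y a square-integrable real random variable with Var[Y] > 0. Then for every j ∈ {1,…,p}, the Shapley effect satisfies 0 ≤ Sh*(X^{(j)}) ≤ 1. -/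
open MeasureTheory ProbabilityTheory

/-- The σ-algebra generated by the subvector `X^{(U)} = (X^{(j)})_{j∈U}` of `X`. -/
def subSigma {Ω : Type*} [MeasurableSpace Ω] {p : ℕ} (X : Ω → Fin p → ℝ)
    (U : Finset (Fin p)) : MeasurableSpace Ω :=
  MeasurableSpace.comap (fun ω => fun j : U => X ω j) inferInstance

/-- The Shapley effect of the `j`-th input variable:
`Sh*(X^{(j)}) = Σ_{U ⊆ {1,…,p}\{j}} (1/p) · C(p−1,|U|)⁻¹ ·
  (Var[E[Y | X^{(U∪{j})}]] − Var[E[Y | X^{(U)}]]) / Var[Y]`. -/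
noncomputable def shapleyEffect {Ω : Type*} [MeasurableSpace Ω] (μ : Measure Ω)
    {p : ℕ} (X : Ω → Fin p → ℝ) (Y : Ω → ℝ) (j : Fin p) : ℝ :=
  ∑ U ∈ (Finset.univ.erase j).powerset,
    (1 / p : ℝ) * ((p - 1).choose U.card : ℝ)⁻¹ *
      ((variance (μ[Y | subSigma X (insert j U)]) μ
        - variance (μ[Y | subSigma X U]) μ) / variance Y μ)

/- ### Auxiliary lemmas -/

lemma my_variance_congr {Ω : Type*} [MeasurableSpace Ω] {μ : Measure Ω} {X Y : Ω → ℝ}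
    (h : X =ᵐ[μ] Y) : variance X μ = variance Y μ := by
  have hint : ∫ ω, X ω ∂μ = ∫ ω, Y ω ∂μ := integral_congr_ae h
  unfold ProbabilityTheory.variance ProbabilityTheory.evariance
  congr 1
  refine lintegral_congr_ae (h.mono fun ω hω => ?_)
  dsimp only
  rw [hω, hint]

lemma my_condexp_ae_eq_condExpL2 {Ω : Type*} {m m0 : MeasurableSpace Ω} {μ : Measure Ω}
    [IsProbabilityMeasure μ] (hm : m ≤ m0) {Y : Ω → ℝ} (hY : MemLp Y 2 μ) :
    μ[Y|m] =ᵐ[μ] (condExpL2 ℝ ℝ hm (hY.toLp Y) : Ω → ℝ) := by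
  haveI : SigmaFinite (μ.trim hm) := inferInstance
  refine (ae_eq_condExp_of_forall_setIntegral_eq hm (hY.integrable one_le_two)
    (fun s _ _ => (integrable_condExpL2_of_isFiniteMeasure hm).integrableOn)
    (fun s hs hμs => ?_) (aestronglyMeasurable_condExpL2 hm _)).symm
  rw [integral_condExpL2_eq_of_fin_meas_real _ hs hμs.ne]
  exact setIntegral_congr_ae (hm s hs) ((hY.coeFn_toLp).mono fun x hx _ => hx)

lemma my_memℒp_condexp {Ω : Type*} {m m0 : MeasurableSpace Ω} {μ : Measure Ω}
    [IsProbabilityMeasure μ] (hm : m ≤ m0) {Y : Ω → ℝ} (hY : MemLp Y 2 μ) :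
    MemLp (μ[Y|m]) 2 μ :=
  (Lp.memLp ((condExpL2 ℝ ℝ hm (hY.toLp Y) : Lp ℝ 2 μ))).ae_eq
    (my_condexp_ae_eq_condExpL2 hm hY).symm

lemma my_sq_integral (Ω : Type*) [MeasurableSpace Ω] (μ : Measure Ω) (h : Lp ℝ 2 μ) :
    ∫ x, (h x)^2 ∂μ = ‖h‖^2 := by
  rw [← real_inner_self_eq_norm_sq, L2.inner_def]
  simp [RCLike.inner_apply, sq]

lemma my_variance_condexp_le {Ω : Type*} {m m0 : MeasurableSpace Ω} {μ : Measure Ω}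
    [IsProbabilityMeasure μ] (hm : m ≤ m0) {Y : Ω → ℝ} (hY : MemLp Y 2 μ) :
    variance (μ[Y|m]) μ ≤ variance Y μ := by
  have hmem := my_memℒp_condexp hm hY
  rw [variance_eq_sub hmem, variance_eq_sub hY, integral_condExp hm]
  apply sub_le_sub_right
  set f := hY.toLp Y with hf
  set g : Lp ℝ 2 μ := (condExpL2 ℝ ℝ hm f : Lp ℝ 2 μ) with hg
  have h1 : (μ[(μ[Y|m])^2] : ℝ) = ∫ x, (g x)^2 ∂μ := by
    refine integral_congr_ae ((my_condexp_ae_eq_condExpL2 hm hY).mono fun x hx => ?_)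
    simp only [Pi.pow_apply, hx]
    rfl
  have h2 : (μ[Y^2] : ℝ) = ∫ x, (Y x)^2 ∂μ := by simp [Pi.pow_apply]
  rw [h1, h2, my_sq_integral]
  have h3 : ∫ x, (Y x)^2 ∂μ = ‖f‖^2 := by
    rw [← my_sq_integral Ω μ f]
    exact integral_congr_ae ((hY.coeFn_toLp).symm.mono fun x hx => by dsimp only; rw [hx])
  rw [h3]
  exact pow_le_pow_left₀ (norm_nonneg _) (norm_condExpL2_le hm f) 2

lemma my_variance_condexp_mono {Ω : Type*} {m₁ m₂ m0 : MeasurableSpace Ω} {μ : Measure Ω}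
    [IsProbabilityMeasure μ] (h12 : m₁ ≤ m₂) (hm : m₂ ≤ m0) {Y : Ω → ℝ} (hY : MemLp Y 2 μ) :
    variance (μ[Y|m₁]) μ ≤ variance (μ[Y|m₂]) μ := by
  haveI : SigmaFinite (μ.trim hm) := inferInstance
  calc variance (μ[Y|m₁]) μ
      = variance (μ[μ[Y|m₂]|m₁]) μ := (my_variance_congr (condExp_condExp_of_le h12 hm)).symm
    _ ≤ variance (μ[Y|m₂]) μ := my_variance_condexp_le (h12.trans hm) (my_memℒp_condexp hm hY)

lemma my_subSigma_le {Ω : Type*} [MeasurableSpace Ω] {p : ℕ} {X : Ω → Fin p → ℝ}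
    (hX : Measurable X) (U : Finset (Fin p)) : subSigma X U ≤ ‹MeasurableSpace Ω› :=
  Measurable.comap_le (measurable_pi_lambda _ fun j => (measurable_pi_apply (j : Fin p)).comp hX)

lemma my_subSigma_mono {Ω : Type*} [MeasurableSpace Ω] {p : ℕ} (X : Ω → Fin p → ℝ)
    {U V : Finset (Fin p)} (h : U ⊆ V) : subSigma X U ≤ subSigma X V := by
  have heq : (fun ω => fun j : U => X ω j)
      = (fun v : V → ℝ => fun j : U => v ⟨j, h j.2⟩) ∘ (fun ω => fun j : V => X ω j) := rfl
  rw [subSigma, heq, ← MeasurableSpace.comap_comp]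
  exact MeasurableSpace.comap_mono
    (Measurable.comap_le (measurable_pi_lambda _ fun j => measurable_pi_apply _))

lemma my_weight_sum (p : ℕ) (hp : 0 < p) (j : Fin p) :
    ∑ U ∈ (Finset.univ.erase j).powerset, (1 / p : ℝ) * ((p - 1).choose U.card : ℝ)⁻¹ = 1 := by
  have hcard : (Finset.univ.erase j).card = p - 1 := by
    rw [Finset.card_erase_of_mem (Finset.mem_univ j), Finset.card_univ, Fintype.card_fin]
  rw [Finset.powerset_card_disjiUnion]
  erw [Finset.sum_disjiUnion]
  have hk : ∀ k ∈ Finset.range ((Finset.univ.erase j).card + 1),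
      ∑ U ∈ Finset.powersetCard k (Finset.univ.erase j),
        (1 / p : ℝ) * ((p - 1).choose U.card : ℝ)⁻¹ = 1 / p := by
    intro k hk
    rw [Finset.mem_range, Nat.lt_succ_iff, hcard] at hk
    have hpos : 0 < (p - 1).choose k := Nat.choose_pos hk
    rw [Finset.sum_congr rfl (fun U hU => by
      rw [(Finset.mem_powersetCard.mp hU).2]), Finset.sum_const, Finset.card_powersetCard, hcard,
      nsmul_eq_mul]
    field_simp
  rw [Finset.sum_congr rfl hk, Finset.sum_const, Finset.card_range, hcard,
    Nat.sub_add_cancel hp, nsmul_eq_mul]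
  field_simp

/-- Shapley effects lie in `[0,1]`. -/
theorem shapleyEffect_mem_Icc {Ω : Type*} [MeasurableSpace Ω]
    (μ : Measure Ω) [IsProbabilityMeasure μ] (p : ℕ)
    (X : Ω → Fin p → ℝ) (hX : Measurable X)
    (Y : Ω → ℝ) (hY : MemLp Y 2 μ) (hVarY : 0 < variance Y μ)
    (j : Fin p) :
    0 ≤ shapleyEffect μ X Y j ∧ shapleyEffect μ X Y j ≤ 1 := by
  have hp : 0 < p := j.pos
  have hwnn : ∀ U : Finset (Fin p), 0 ≤ (1 / p : ℝ) * ((p - 1).choose U.card : ℝ)⁻¹ := by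
    intro U; positivity
  have hr0 : ∀ U : Finset (Fin p),
      0 ≤ (variance (μ[Y | subSigma X (insert j U)]) μ
        - variance (μ[Y | subSigma X U]) μ) / variance Y μ := by
    intro U
    refine div_nonneg (sub_nonneg.2 ?_) hVarY.le
    exact my_variance_condexp_mono (my_subSigma_mono X (Finset.subset_insert j U))
      (my_subSigma_le hX _) hY
  have hr1 : ∀ U : Finset (Fin p),
      (variance (μ[Y | subSigma X (insert j U)]) μ
        - variance (μ[Y | subSigma X U]) μ) / variance Y μ ≤ 1 := by
    intro U
    rw [div_le_one hVarY]
    have h1 : variance (μ[Y | subSigma X (insert j U)]) μ ≤ variance Y μ :=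
      my_variance_condexp_le (my_subSigma_le hX _) hY
    have h2 : 0 ≤ variance (μ[Y | subSigma X U]) μ := variance_nonneg _ _
    linarith
  constructor
  · exact Finset.sum_nonneg fun U _ => mul_nonneg (hwnn U) (hr0 U)
  · rw [shapleyEffect]
    refine le_trans (Finset.sum_le_sum fun U _ => ?_) (le_of_eq (my_weight_sum p hp j))
    calc (1 / p : ℝ) * ((p - 1).choose U.card : ℝ)⁻¹ *
        ((variance (μ[Y | subSigma X (insert j U)]) μ
          - variance (μ[Y | subSigma X U]) μ) / variance Y μ)
        ≤ (1 / p : ℝ) * ((p - 1).choose U.card : ℝ)⁻¹ * 1 :=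
          mul_le_mul_of_nonneg_left (hr1 U) (hwnn U)
      _ = (1 / p : ℝ) * ((p - 1).choose U.card : ℝ)⁻¹ := mul_one _
end

section
/- Let X = (X^{(1)},…,X^{(p)}) be a random vector and Y a square-integrable real random variable with Var[Y] > 0. If two coordinates are almost-surely equal, X^{(j)} = X^{(k)} a.s. with j ≠ k, then their Shapley effects coincide: Sh*(X^{(j)}) = Sh*(X^{(k)}). -/
open MeasureTheory ProbabilityTheory

/-- Doob–Dynkin style factorization: a real function measurable w.r.t. the comap σ-algebra
factors through the map. -/
lemma exists_factor_of_measurable_comap {Ω D : Type*} [MeasurableSpace D] {φ : Ω → D} {f : Ω → ℝ}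
    (hf : Measurable[MeasurableSpace.comap φ inferInstance] f) :
    ∃ F : D → ℝ, Measurable F ∧ ∀ ω, F (φ ω) = f ω := by
  classical
  have h : ∀ q : ℚ, ∃ B : Set D, MeasurableSet B ∧ φ ⁻¹' B = f ⁻¹' Set.Iio (q : ℝ) :=
    fun q => hf measurableSet_Iio
  choose B hBmeas hBpre using h
  set G : D → EReal := fun x => ⨅ q : ℚ, if x ∈ B q then ((q : ℝ) : EReal) else ⊤ with hGdef
  have hG : Measurable G :=
    Measurable.iInf fun q => Measurable.ite (hBmeas q) measurable_const measurable_const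
  refine ⟨fun x => (G x).toReal, measurable_ereal_toReal.comp hG, fun ω => ?_⟩
  have hmemiff : ∀ q : ℚ, φ ω ∈ B q ↔ f ω < (q : ℝ) := by
    intro q
    have := hBpre q
    constructor
    · intro h'
      have : ω ∈ f ⁻¹' Set.Iio (q : ℝ) := this ▸ h'
      exact this
    · intro h'
      have h2 : ω ∈ φ ⁻¹' B q := by rw [this]; exact h'
      exact h2
  have hkey : G (φ ω) = ((f ω : ℝ) : EReal) := by
    apply le_antisymm
    · by_contra hlt
      push_neg at hlt
      obtain ⟨q, hq1, hq2⟩ := EReal.exists_rat_btwn_of_lt hlt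
      have hmem : φ ω ∈ B q := (hmemiff q).2 (by exact_mod_cast hq1)
      have hle : G (φ ω) ≤ ((q : ℝ) : EReal) := by
        refine iInf_le_of_le q ?_
        simp [hGdef, hmem]
      exact absurd (hle.trans_lt hq2) (lt_irrefl _)
    · refine le_iInf fun q => ?_
      by_cases hq : φ ω ∈ B q
      · simp only [hGdef, hq, if_true]
        exact_mod_cast ((hmemiff q).1 hq).le
      · simp [hGdef, hq]
  show (G (φ ω)).toReal = f ω
  rw [hkey, EReal.toReal_coe]

lemma variance_congr_ae {Ω : Type*} [MeasurableSpace Ω] {μ : Measure Ω} {f g : Ω → ℝ}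
    (h : f =ᵐ[μ] g) : variance f μ = variance g μ := by
  unfold ProbabilityTheory.variance ProbabilityTheory.evariance
  have hint : (∫ x, f x ∂μ) = ∫ x, g x ∂μ := integral_congr_ae h
  congr 1
  refine lintegral_congr_ae ?_
  filter_upwards [h] with ω hω
  rw [hω, hint]

lemma subSigma_le {Ω : Type*} [MeasurableSpace Ω] {p : ℕ} {X : Ω → Fin p → ℝ}
    (hX : Measurable X) (V : Finset (Fin p)) : subSigma X V ≤ ‹MeasurableSpace Ω› := by
  refine Measurable.comap_le ?_
  exact measurable_pi_lambda _ fun i => (measurable_pi_apply (i : Fin p)).comp hX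

/-- The key lemma: conditional expectations w.r.t. the σ-algebras of `V` and of its image under
the transposition of two a.s.-equal coordinates agree almost everywhere. -/
lemma condexp_subSigma_image_swap {Ω : Type*} [MeasurableSpace Ω] (μ : Measure Ω)
    [IsProbabilityMeasure μ] {p : ℕ} {X : Ω → Fin p → ℝ} (hX : Measurable X)
    {Y : Ω → ℝ} (hY : Integrable Y μ) {j k : Fin p}
    (heq : ∀ᵐ ω ∂μ, X ω j = X ω k) (V : Finset (Fin p)) :
    μ[Y | subSigma X V] =ᵐ[μ] μ[Y | subSigma X (V.image (Equiv.swap j k))] := by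
  classical
  set σ := Equiv.swap j k with hσ
  set V' := V.image σ with hV'
  have hswap : ∀ᵐ ω ∂μ, ∀ i : Fin p, X ω (σ i) = X ω i := by
    filter_upwards [heq] with ω h i
    rcases eq_or_ne i j with rfl | hij
    · rw [hσ, Equiv.swap_apply_left]; exact h.symm
    rcases eq_or_ne i k with rfl | hik
    · rw [hσ, Equiv.swap_apply_right]; exact h
    · rw [hσ, Equiv.swap_apply_of_ne_of_ne hij hik]
  have hmemV' : ∀ i : Fin p, i ∈ V' ↔ σ i ∈ V := by
    intro i
    constructor
    · intro hi
      obtain ⟨a, ha, rfl⟩ := Finset.mem_image.1 hi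
      rwa [hσ, Equiv.swap_apply_self]
    · intro hi
      exact Finset.mem_image.2 ⟨σ i, hi, by rw [hσ, Equiv.swap_apply_self]⟩
  set φ : Ω → ({ x // x ∈ V } → ℝ) := fun ω => fun i => X ω i with hφdef
  set φ' : Ω → ({ x // x ∈ V' } → ℝ) := fun ω => fun i => X ω i with hφ'def
  have hm : subSigma X V ≤ ‹MeasurableSpace Ω› := subSigma_le hX V
  have hm' : subSigma X V' ≤ ‹MeasurableSpace Ω› := subSigma_le hX V'
  -- relabeling maps
  set ρ : ({ x // x ∈ V } → ℝ) → ({ x // x ∈ V' } → ℝ) :=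
    fun v i => v ⟨σ (i : Fin p), (hmemV' i).1 i.2⟩ with hρdef
  have hρ : Measurable ρ := measurable_pi_lambda _ fun i => measurable_pi_apply _
  set ρ' : ({ x // x ∈ V' } → ℝ) → ({ x // x ∈ V } → ℝ) :=
    fun v i => v ⟨σ (i : Fin p), (hmemV' (σ (i : Fin p))).2
      (by rw [hσ, Equiv.swap_apply_self]; exact i.2)⟩ with hρ'def
  have hρ' : Measurable ρ' := measurable_pi_lambda _ fun i => measurable_pi_apply _
  have hclaim1 : ∀ᵐ ω ∂μ, ρ (φ ω) = φ' ω := by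
    filter_upwards [hswap] with ω h
    funext i
    exact h (i : Fin p)
  have hclaim2 : ∀ᵐ ω ∂μ, ρ' (φ' ω) = φ ω := by
    filter_upwards [hswap] with ω h
    funext i
    exact h (i : Fin p)
  set g : Ω → ℝ := μ[Y | subSigma X V] with hgdef
  have hgm : Measurable[subSigma X V] g :=
    (stronglyMeasurable_condExp (m := subSigma X V)).measurable
  obtain ⟨F, hF, hFφ⟩ := exists_factor_of_measurable_comap (φ := φ) (f := g) hgm
  have hASM : AEStronglyMeasurable[subSigma X V'] g μ := by
    refine ⟨fun ω => F (ρ' (φ' ω)), ?_, ?_⟩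
    · have hφ'meas : Measurable[subSigma X V'] φ' := Measurable.of_comap_le le_rfl
      exact ((hF.comp hρ').comp hφ'meas).stronglyMeasurable
    · filter_upwards [hclaim2] with ω h
      rw [h, hFφ]
  have hInt : ∀ s, MeasurableSet[subSigma X V'] s → μ s < ⊤ →
      ∫ x in s, g x ∂μ = ∫ x in s, Y x ∂μ := by
    intro s hs _
    obtain ⟨A, hA, rfl⟩ := hs
    have hst : (φ' ⁻¹' A : Set Ω) =ᵐ[μ] (φ ⁻¹' (ρ ⁻¹' A) : Set Ω) := by
      rw [Filter.eventuallyEq_set]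
      filter_upwards [hclaim1] with ω h
      simp only [Set.mem_preimage, h]
    have ht : MeasurableSet[subSigma X V] (φ ⁻¹' (ρ ⁻¹' A)) := ⟨ρ ⁻¹' A, hρ hA, rfl⟩
    calc ∫ x in φ' ⁻¹' A, g x ∂μ
        = ∫ x in φ ⁻¹' (ρ ⁻¹' A), g x ∂μ := setIntegral_congr_set hst
      _ = ∫ x in φ ⁻¹' (ρ ⁻¹' A), Y x ∂μ := setIntegral_condExp hm hY ht
      _ = ∫ x in φ' ⁻¹' A, Y x ∂μ := (setIntegral_congr_set hst).symm
  exact ae_eq_condExp_of_forall_setIntegral_eq hm' hY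
    (fun s _ _ => integrable_condExp.integrableOn) hInt hASM

/-- Symmetry of Shapley effects: if two coordinates are almost surely equal,
their Shapley effects coincide. -/
theorem shapleyEffect_symm {Ω : Type*} [MeasurableSpace Ω]
    (μ : Measure Ω) [IsProbabilityMeasure μ] (p : ℕ)
    (X : Ω → Fin p → ℝ) (hX : Measurable X)
    (Y : Ω → ℝ) (hY : MemLp Y 2 μ) (hVarY : 0 < variance Y μ)
    (j k : Fin p) (hjk : j ≠ k)
    (heq : ∀ᵐ ω ∂μ, X ω j = X ω k) :
    shapleyEffect μ X Y j = shapleyEffect μ X Y k := by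
  classical
  have hYint : Integrable Y μ := hY.integrable one_le_two
  set σ := Equiv.swap j k with hσ
  have hmemim : ∀ (U : Finset (Fin p)) (i : Fin p), i ∈ U.image σ ↔ σ i ∈ U := by
    intro U i
    constructor
    · intro hi
      obtain ⟨a, ha, rfl⟩ := Finset.mem_image.1 hi
      rwa [hσ, Equiv.swap_apply_self]
    · intro hi
      exact Finset.mem_image.2 ⟨σ i, hi, by rw [hσ, Equiv.swap_apply_self]⟩
  have hmempow : ∀ (a b : Fin p) (U : Finset (Fin p)),
      U ∈ (Finset.univ.erase a).powerset ↔ a ∉ U := by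
    intro a b U
    rw [Finset.mem_powerset, Finset.subset_erase]
    simp
  have himim : ∀ U : Finset (Fin p), (U.image σ).image σ = U := by
    intro U
    rw [Finset.image_image]
    have : ⇑σ ∘ ⇑σ = id := funext fun x => by rw [hσ]; exact Equiv.swap_apply_self j k x
    rw [this, Finset.image_id]
  unfold shapleyEffect
  refine Finset.sum_bij' (fun U _ => U.image σ) (fun U _ => U.image σ) ?_ ?_ ?_ ?_ ?_
  · intro U hU
    rw [hmempow j k U] at hU
    rw [hmempow k j (U.image σ), hmemim]
    rwa [hσ, Equiv.swap_apply_right]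
  · intro U hU
    rw [hmempow k j U] at hU
    rw [hmempow j k (U.image σ), hmemim]
    rwa [hσ, Equiv.swap_apply_left]
  · intro U _
    exact himim U
  · intro U _
    exact himim U
  · intro U hU
    have hcard : (U.image σ).card = U.card := Finset.card_image_of_injective U σ.injective
    have hins : (insert j U).image σ = insert k (U.image σ) := by
      rw [Finset.image_insert, hσ, Equiv.swap_apply_left]
    have h1 : variance (μ[Y | subSigma X (insert j U)]) μ
        = variance (μ[Y | subSigma X (insert k (U.image σ))]) μ := by
      rw [← hins]
      exact variance_congr_ae (condexp_subSigma_image_swap μ hX hYint heq (insert j U))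
    have h2 : variance (μ[Y | subSigma X U]) μ
        = variance (μ[Y | subSigma X (U.image σ)]) μ :=
      variance_congr_ae (condexp_subSigma_image_swap μ hX hYint heq U)
    rw [hcard, h1, h2]
end
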